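/- The Baumslag-Solitar group BS(1,p²) = ⟨a,b | aba⁻¹ = b^{p²}⟩ embeds as an index-2 subgroup of the group B₂(ℤ[1/p]) of upper triangular 2×2 matrices of determinant 1 over ℤ[1/p]. -/

import Mathlib

/-- The Baumslag–Solitar relation `a b a⁻¹ (b^m)⁻¹` in the free group on `Bool`
(`a = of true`, `b = of false`). -/
def bsRels (m : ℕ) : Set (FreeGroup Bool) :=
  {FreeGroup.of true * FreeGroup.of false * (FreeGroup.of true)⁻¹ *
    (FreeGroup.of false ^ m)⁻¹}

/-- The Baumslag–Solitar group `BS(1, m) = ⟨a, b ∣ a b a⁻¹ = b^m⟩`. -/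
def BaumslagSolitar (m : ℕ) : Type := PresentedGroup (bsRels m)

instance (m : ℕ) : Group (BaumslagSolitar m) := by
  unfold BaumslagSolitar; infer_instance

/-- The group `B₂(R)` of upper triangular matrices in `SL₂(R)`. -/
def upperTriangularSL2 (R : Type*) [CommRing R] :
    Subgroup (Matrix.SpecialLinearGroup (Fin 2) R) where
  carrier := {A | (A : Matrix (Fin 2) (Fin 2) R) 1 0 = 0}
  one_mem' := by
    simp [Matrix.SpecialLinearGroup.coe_one, Matrix.one_apply]
  mul_mem' := by
    intro A B hA hB
    simp only [Set.mem_setOf_eq] at *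
    simp [Matrix.SpecialLinearGroup.coe_mul, Matrix.mul_apply, Fin.sum_univ_two, hA, hB]
  inv_mem' := by
    intro A hA
    simp only [Set.mem_setOf_eq] at *
    rw [Matrix.SpecialLinearGroup.coe_inv, Matrix.adjugate_fin_two]
    simp [hA]

namespace BSaux
variable {R : Type*} [CommRing R]

/-- coercion to matrix of an element of the upper triangular group -/
def mat (g : upperTriangularSL2 R) : Matrix (Fin 2) (Fin 2) R := ((g : Matrix.SpecialLinearGroup (Fin 2) R) : Matrix (Fin 2) (Fin 2) R)

lemma ext_mat {g h : upperTriangularSL2 R} (H : mat g = mat h) : g = h := by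
  apply Subtype.ext; apply Subtype.ext; exact H

@[simp] lemma mat_mul (g h : upperTriangularSL2 R) : mat (g * h) = mat g * mat h := rfl

@[simp] lemma mat_one : mat (1 : upperTriangularSL2 R) = 1 := rfl

/-- unipotent element -/
def tG (x : R) : upperTriangularSL2 R :=
  ⟨⟨!![1, x; 0, 1], by simp [Matrix.det_fin_two_of]⟩, by
    show (!![1, x; 0, 1] : Matrix (Fin 2) (Fin 2) R) 1 0 = 0; simp⟩

@[simp] lemma mat_tG (x : R) : mat (tG x) = !![1, x; 0, 1] := rfl

/-- diagonal element -/
def dG (u : Rˣ) : upperTriangularSL2 R :=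
  ⟨⟨!![(u : R), 0; 0, ((u⁻¹ : Rˣ) : R)], by simp [Matrix.det_fin_two_of]⟩, by
    show (!![(u : R), 0; 0, ((u⁻¹ : Rˣ) : R)] : Matrix (Fin 2) (Fin 2) R) 1 0 = 0; simp⟩

@[simp] lemma mat_dG (u : Rˣ) : mat (dG u) = !![(u : R), 0; 0, ((u⁻¹ : Rˣ) : R)] := rfl

lemma tG_mul (x y : R) : tG x * tG y = tG (x + y) := by
  apply ext_mat; simp [Matrix.mul_fin_two]; ring_nf

lemma tG_zero : tG (0 : R) = 1 := by
  apply ext_mat; simp [Matrix.one_fin_two]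

/-- `tG` as a monoid hom from `Multiplicative R`. -/
def tHom : Multiplicative R →* upperTriangularSL2 R where
  toFun x := tG (Multiplicative.toAdd x)
  map_one' := tG_zero
  map_mul' x y := by rw [tG_mul]; rfl

@[simp] lemma tHom_apply (x : R) : tHom (Multiplicative.ofAdd x) = tG x := rfl

lemma tG_zpow (x : R) (n : ℤ) : (tG x) ^ n = tG (n • x) := by
  have h := map_zpow tHom (Multiplicative.ofAdd x) n
  rw [← ofAdd_zsmul] at h
  exact h.symm

lemma tG_pow (x : R) (n : ℕ) : (tG x) ^ n = tG (n • x) := by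
  have h := map_pow tHom (Multiplicative.ofAdd x) n
  rw [← ofAdd_nsmul] at h
  exact h.symm

lemma dG_mul (u v : Rˣ) : dG u * dG v = dG (u * v) := by
  apply ext_mat; simp [Matrix.mul_fin_two, mul_comm]

lemma dG_one : dG (1 : Rˣ) = 1 := by
  apply ext_mat; simp [Matrix.one_fin_two]

def dHom : Rˣ →* upperTriangularSL2 R where
  toFun := dG
  map_one' := dG_one
  map_mul' u v := (dG_mul u v).symm

lemma dG_pow (u : Rˣ) (n : ℕ) : (dG u) ^ n = dG (u ^ n) := (map_pow dHom u n).symm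

lemma dG_zpow (u : Rˣ) (n : ℤ) : (dG u) ^ n = dG (u ^ n) := (map_zpow dHom u n).symm

lemma dG_inv (u : Rˣ) : (dG u)⁻¹ = dG u⁻¹ := (map_inv dHom u).symm

lemma dG_mul_tG (u : Rˣ) (x : R) : dG u * tG x = tG (u * u * x) * dG u := by
  apply ext_mat; simp [Matrix.mul_fin_two, mul_comm, mul_assoc, mul_left_comm]

lemma mat_dG_mul_tG (u : Rˣ) (x : R) :
    mat (dG u * tG x) = !![(u : R), (u : R) * x; 0, ((u⁻¹ : Rˣ) : R)] := by
  simp [Matrix.mul_fin_two]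

lemma dG_conj_tG (u : Rˣ) (x : R) : dG u * tG x * (dG u)⁻¹ = tG (u * u * x) := by
  rw [dG_mul_tG, mul_assoc, mul_inv_cancel, mul_one]

end BSaux

namespace Padic

variable (p : ℕ)

abbrev Rp (p : ℕ) := Localization.Away (p : ℤ)

lemma p_isUnit : IsUnit (algebraMap ℤ (Rp p) (p : ℤ)) :=
  IsLocalization.map_units (M := Submonoid.powers ((p : ℤ))) (Rp p)
    ⟨(p : ℤ), Submonoid.mem_powers _⟩

noncomputable def P : (Rp p)ˣ := (p_isUnit p).unit

@[simp] lemma P_coe : ((P p : (Rp p)ˣ) : Rp p) = algebraMap ℤ (Rp p) (p : ℤ) := rfl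

lemma q_isUnit (hp : p.Prime) : IsUnit ((Int.castRingHom ℚ) (p : ℤ)) := by
  simp only [isUnit_iff_ne_zero, eq_intCast, Int.cast_natCast, ne_eq, Nat.cast_eq_zero]
  exact hp.ne_zero

noncomputable def toQ (hp : p.Prime) : Rp p →+* ℚ :=
  IsLocalization.Away.lift (p : ℤ) (q_isUnit p hp)

variable (hp : p.Prime)

@[simp] lemma toQ_alg (n : ℤ) : toQ p hp (algebraMap ℤ (Rp p) n) = (n : ℚ) := by
  have := IsLocalization.Away.lift_eq (S := Rp p) (p : ℤ) (q_isUnit p hp) n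
  simpa using this

lemma toQ_eq_zero {r : Rp p} (h : toQ p hp r = 0) : r = 0 := by
  obtain ⟨⟨x, s⟩, hs⟩ := IsLocalization.surj (Submonoid.powers ((p : ℤ))) r
  have h2 := congrArg (toQ p hp) hs
  simp only [map_mul, toQ_alg, h, zero_mul] at h2
  have hx : x = 0 := by exact_mod_cast h2.symm
  rw [hx, map_zero] at hs
  obtain ⟨u, hu⟩ := IsLocalization.map_units (Rp p) s
  rw [← hu] at hs
  exact (Units.mul_left_eq_zero u).mp hs

lemma toQ_inj : Function.Injective (toQ p hp) := by
  intro a b hab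
  have h0 : toQ p hp (a - b) = 0 := by rw [map_sub, hab, sub_self]
  exact sub_eq_zero.mp (toQ_eq_zero p hp h0)

include hp in
lemma alg_inj : Function.Injective (algebraMap ℤ (Rp p)) := by
  intro a b hab
  have h2 := congrArg (toQ p hp) hab
  simp only [toQ_alg] at h2
  exact_mod_cast h2

@[simp] lemma toQ_P : toQ p hp ((P p : (Rp p)ˣ) : Rp p) = (p : ℚ) := by
  simp

/-- positive units of `ℤ[1/p]` are integer powers of `p` -/
lemma pos_unit_eq_P_zpow (u : (Rp p)ˣ) (hu : 0 < toQ p hp (u : Rp p)) :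
    ∃ k : ℤ, u = (P p) ^ k := by
  obtain ⟨⟨x, s⟩, hs⟩ := IsLocalization.surj (Submonoid.powers ((p : ℤ))) (u : Rp p)
  obtain ⟨⟨x', s'⟩, hs'⟩ := IsLocalization.surj (Submonoid.powers ((p : ℤ))) ((u⁻¹ : (Rp p)ˣ) : Rp p)
  obtain ⟨e, he⟩ := s.2
  obtain ⟨e', he'⟩ := s'.2
  have he2 : ((p : ℤ)) ^ e = (s : ℤ) := he
  have he2' : ((p : ℤ)) ^ e' = (s' : ℤ) := he'
  simp only at hs hs'
  have h1 : (u : Rp p) * ((u⁻¹ : (Rp p)ˣ) : Rp p) = 1 := u.mul_inv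
  have key : algebraMap ℤ (Rp p) (x * x') = algebraMap ℤ (Rp p) ((p : ℤ) ^ (e + e')) := by
    rw [map_mul, ← hs, ← hs', mul_mul_mul_comm, h1, one_mul, ← map_mul, ← he2, ← he2', ← pow_add]
  have hxx' : x * x' = (p : ℤ) ^ (e + e') := alg_inj p hp key
  have hppos : (0 : ℚ) < (p : ℚ) := by exact_mod_cast hp.pos
  have hxQ : (0 : ℚ) < (x : ℚ) := by
    have h2 := congrArg (toQ p hp) hs
    simp only [map_mul, toQ_alg] at h2
    rw [← h2]
    apply mul_pos hu
    rw [← he2]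
    push_cast
    positivity
  have hxpos : 0 < x := by exact_mod_cast hxQ
  have hdvd : x.natAbs ∣ p ^ (e + e') := by
    have hd : x ∣ (p : ℤ) ^ (e + e') := ⟨x', hxx'.symm⟩
    have hd2 := Int.natAbs_dvd_natAbs.mpr hd
    have hna : ((p : ℤ) ^ (e + e')).natAbs = p ^ (e + e') := by
      rw [Int.natAbs_pow]; simp
    rwa [hna] at hd2
  obtain ⟨t, _, ht⟩ := (Nat.dvd_prime_pow hp).mp hdvd
  have hxval : x = (p : ℤ) ^ t := by
    have hna := Int.natAbs_of_nonneg hxpos.le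
    rw [← hna, ht]; push_cast; ring
  refine ⟨(t : ℤ) - (e : ℤ), ?_⟩
  have hunit : u * (P p) ^ e = (P p) ^ t := by
    apply Units.ext
    rw [Units.val_mul, Units.val_pow_eq_pow_val, Units.val_pow_eq_pow_val, P_coe,
      ← map_pow, ← map_pow, he2, hs, hxval]
  rw [zpow_sub, zpow_natCast, zpow_natCast, ← hunit]
  group

end Padic

namespace BSgrp

variable (m : ℕ)

/-- generator `a` -/
def a : PresentedGroup (bsRels m) := PresentedGroup.of true
/-- generator `b` -/
def b : PresentedGroup (bsRels m) := PresentedGroup.of false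

lemma rel : a m * b m * (a m)⁻¹ = (b m) ^ m := by
  have h : (PresentedGroup.mk (bsRels m) (FreeGroup.of true * FreeGroup.of false *
      (FreeGroup.of true)⁻¹ * (FreeGroup.of false ^ m)⁻¹)) = 1 := by
    apply (QuotientGroup.eq_one_iff _).mpr
    exact Subgroup.subset_normalClosure rfl
  rw [map_mul, map_mul, map_mul, map_inv, map_inv, map_pow] at h
  have h2 : a m * b m * (a m)⁻¹ * ((b m) ^ m)⁻¹ = 1 := h
  rw [mul_inv_eq_one] at h2
  exact h2

lemma conj_b_zpow (n : ℤ) : a m * (b m) ^ n * (a m)⁻¹ = (b m) ^ ((m : ℤ) * n) := by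
  rw [← conj_zpow, rel, ← zpow_natCast, ← zpow_mul]

/-- `a^j b^n a^{-j} = b^{m^j n}` -/
lemma conj_pow_b_zpow (j : ℕ) (n : ℤ) :
    (a m) ^ j * (b m) ^ n * ((a m)⁻¹) ^ j = (b m) ^ ((m : ℤ) ^ j * n) := by
  induction j generalizing n with
  | zero => simp
  | succ j ih =>
    have : (a m) ^ (j + 1) * (b m) ^ n * ((a m)⁻¹) ^ (j + 1)
        = (a m) ^ j * (a m * (b m) ^ n * (a m)⁻¹) * ((a m)⁻¹) ^ j := by
      rw [pow_succ, pow_succ]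
      group
    rw [this, conj_b_zpow, ih]
    congr 1
    ring

/-- normal form elements -/
def e (i j : ℕ) (n : ℤ) : PresentedGroup (bsRels m) :=
  ((a m)⁻¹) ^ i * (b m) ^ n * (a m) ^ j

lemma e_mul_a (i j : ℕ) (n : ℤ) : e m i j n * a m = e m i (j + 1) n := by
  rw [e, e, pow_succ]
  group

lemma e_mul_a_inv_succ (i j : ℕ) (n : ℤ) : e m i (j + 1) n * (a m)⁻¹ = e m i j n := by
  rw [e, e, pow_succ]
  group

lemma e_mul_a_inv_zero (i : ℕ) (n : ℤ) : e m i 0 n * (a m)⁻¹ = e m (i + 1) 0 ((m : ℤ) * n) := by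
  rw [e, e, pow_succ, ← conj_b_zpow]
  group

lemma swap (j : ℕ) (n : ℤ) : (a m) ^ j * (b m) ^ n = (b m) ^ ((m : ℤ) ^ j * n) * (a m) ^ j := by
  rw [← conj_pow_b_zpow]
  group

lemma e_mul_b_zpow (i j : ℕ) (n k : ℤ) :
    e m i j n * (b m) ^ k = e m i j (n + (m : ℤ) ^ j * k) := by
  rw [e, e, zpow_add]
  calc ((a m)⁻¹) ^ i * (b m) ^ n * (a m) ^ j * (b m) ^ k
      = ((a m)⁻¹) ^ i * (b m) ^ n * ((a m) ^ j * (b m) ^ k) := by group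
    _ = ((a m)⁻¹) ^ i * (b m) ^ n * ((b m) ^ ((m : ℤ) ^ j * k) * (a m) ^ j) := by rw [swap]
    _ = ((a m)⁻¹) ^ i * ((b m) ^ n * (b m) ^ ((m : ℤ) ^ j * k)) * (a m) ^ j := by group

lemma normal_form (g : PresentedGroup (bsRels m)) : ∃ (i j : ℕ) (n : ℤ), g = e m i j n := by
  have hgen : g ∈ Subgroup.closure (Set.range (PresentedGroup.of : Bool → PresentedGroup (bsRels m))) := by
    rw [PresentedGroup.closure_range_of]
    trivial
  induction hgen using Subgroup.closure_induction_right with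
  | one => exact ⟨0, 0, 0, by simp [e]⟩
  | mul_right x hx y hy ih =>
    obtain ⟨i, j, n, hn⟩ := ih
    obtain ⟨c, rfl⟩ := hy
    cases c with
    | true =>
      exact ⟨i, j + 1, n, by rw [hn, ← e_mul_a]; rfl⟩
    | false =>
      refine ⟨i, j, n + (m : ℤ) ^ j, ?_⟩
      have := e_mul_b_zpow m i j n 1
      rw [mul_one] at this
      rw [hn, ← this, zpow_one]
      rfl
  | mul_inv_cancel x hx y hy ih =>
    obtain ⟨i, j, n, hn⟩ := ih
    obtain ⟨c, rfl⟩ := hy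
    cases c with
    | true =>
      cases j with
      | zero => exact ⟨i + 1, 0, (m : ℤ) * n, by rw [hn, ← e_mul_a_inv_zero]; rfl⟩
      | succ j' => exact ⟨i, j', n, by rw [hn]; exact e_mul_a_inv_succ m i j' n⟩
    | false =>
      refine ⟨i, j, n - (m : ℤ) ^ j, ?_⟩
      have h := e_mul_b_zpow m i j n (-1)
      rw [zpow_neg, zpow_one, mul_neg_one] at h
      rw [hn, sub_eq_add_neg]
      exact h

end BSgrp

namespace Main

open Padic BSgrp BSaux

variable (p : ℕ) (hp : p.Prime)

local notation "R" => Rp p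
local notation "G" => upperTriangularSL2 (Rp p)

/-- image of `a` -/
noncomputable def A : upperTriangularSL2 (Rp p) := dG (P p)
/-- image of `b` -/
noncomputable def Bm : upperTriangularSL2 (Rp p) := tG (1 : Rp p)

noncomputable def f : Bool → upperTriangularSL2 (Rp p) := fun c => cond c (A p) (Bm p)

lemma rels_check : ∀ r ∈ bsRels (p ^ 2), (FreeGroup.lift (f p)) r = 1 := by
  intro r hr
  have : r = FreeGroup.of true * FreeGroup.of false * (FreeGroup.of true)⁻¹ *
      (FreeGroup.of false ^ (p ^ 2))⁻¹ := hr
  subst this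
  simp only [map_mul, map_inv, map_pow, FreeGroup.lift_apply_of]
  show A p * Bm p * (A p)⁻¹ * ((Bm p) ^ (p ^ 2))⁻¹ = 1
  rw [A, Bm, dG_conj_tG, tG_pow, mul_inv_eq_one]
  congr 1
  rw [mul_one, nsmul_eq_mul, mul_one, P_coe, ← map_mul, eq_intCast]
  push_cast
  ring

noncomputable def phi : PresentedGroup (bsRels (p ^ 2)) →* upperTriangularSL2 (Rp p) :=
  PresentedGroup.toGroup (rels_check p)

@[simp] lemma phi_a : phi p (a (p ^ 2)) = A p := PresentedGroup.toGroup.of _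
@[simp] lemma phi_b : phi p (b (p ^ 2)) = Bm p := PresentedGroup.toGroup.of _

lemma tG_intCast (n : ℤ) : tG (algebraMap ℤ (Rp p) n) = (Bm p) ^ n := by
  rw [Bm, tG_zpow, zsmul_eq_mul, mul_one, eq_intCast]

lemma phi_e (i j : ℕ) (n : ℤ) :
    phi p (e (p ^ 2) i j n) = dG ((P p)⁻¹ ^ i) * tG ((n : ℤ) • (1 : Rp p)) * dG ((P p) ^ j) := by
  rw [e]
  rw [map_mul, map_mul, map_pow, map_inv, map_zpow, map_pow, phi_a, phi_b]
  rw [A, Bm, dG_inv, dG_pow, dG_pow, tG_zpow]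

lemma mat_dtd (u v : (Rp p)ˣ) (x : Rp p) :
    BSaux.mat (dG u * tG x * dG v) =
      !![(u : Rp p) * v, (u : Rp p) * x * (v⁻¹ : (Rp p)ˣ); 0, ((u⁻¹ : (Rp p)ˣ) : Rp p) * (v⁻¹ : (Rp p)ˣ)] := by
  simp [Matrix.mul_fin_two]

include hp in
lemma p_zpow_eq_one {k : ℤ} (h : (P p) ^ k = 1) : k = 0 := by
  have h2 : (Units.map (toQ p hp).toMonoidHom) ((P p) ^ k) = 1 := by rw [h]; simp
  rw [map_zpow] at h2
  have h3 : ((Units.map (toQ p hp).toMonoidHom (P p) : ℚˣ) : ℚ) ^ k = 1 := by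
    rw [← Units.val_zpow_eq_zpow_val, h2, Units.val_one]
  rw [Units.coe_map] at h3
  have h4 : ((p : ℚ)) ^ k = 1 := by
    rw [show ((toQ p hp).toMonoidHom ((P p : (Rp p)ˣ) : Rp p)) = (p : ℚ) from toQ_P p hp] at h3
    exact h3
  have hinj := zpow_right_injective₀ (a := (p : ℚ))
    (by exact_mod_cast hp.pos) (by exact_mod_cast hp.one_lt.ne')
  have := hinj (a₁ := k) (a₂ := 0) (by simpa using h4)
  exact this

include hp in
lemma phi_inj : Function.Injective (phi p) := by
  rw [injective_iff_map_eq_one]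
  intro g hg
  obtain ⟨i, j, n, rfl⟩ := normal_form (p ^ 2) g
  rw [phi_e] at hg
  -- extract matrix entries
  have hmat := congrArg BSaux.mat hg
  rw [mat_dtd, BSaux.mat_one] at hmat
  have h00 : (((P p)⁻¹ ^ i : (Rp p)ˣ) : Rp p) * (((P p) ^ j : (Rp p)ˣ) : Rp p) = 1 := by
    have := congrFun (congrFun hmat 0) 0
    simpa [Matrix.one_apply] using this
  have h01 : (((P p)⁻¹ ^ i : (Rp p)ˣ) : Rp p) * ((n : ℤ) • (1 : Rp p)) * ((((P p) ^ j)⁻¹ : (Rp p)ˣ) : Rp p) = 0 := by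
    have := congrFun (congrFun hmat 0) 1
    simpa [Matrix.one_apply] using this
  -- deduce i = j
  have hunits : (P p)⁻¹ ^ i * (P p) ^ j = 1 := Units.ext (by
    rw [Units.val_mul, Units.val_one]; exact h00)
  have hzp : (P p) ^ ((j : ℤ) - (i : ℤ)) = 1 := by
    rw [zpow_sub, zpow_natCast, zpow_natCast]
    rw [inv_pow, mul_comm] at hunits
    exact hunits

  have hij : (j : ℤ) = (i : ℤ) := by
    have := p_zpow_eq_one p hp hzp
    omega
  -- deduce n = 0
  have hn : n = 0 := by
    have h1 : ((n : ℤ) • (1 : Rp p)) = 0 := by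
      have t1 := (Units.mul_left_eq_zero ((P p ^ j)⁻¹)).mp h01
      exact (Units.mul_right_eq_zero ((P p)⁻¹ ^ i)).mp t1
    rw [zsmul_eq_mul, mul_one] at h1
    have h2 : algebraMap ℤ (Rp p) n = algebraMap ℤ (Rp p) 0 := by
      rw [map_zero, eq_intCast]; exact h1
    exact alg_inj p hp h2
  subst hn
  have : (i : ℤ) = (j : ℤ) := hij.symm
  have hij' : i = j := by omega
  subst hij'
  rw [e]
  simp [inv_pow]

lemma mat_10 (g : upperTriangularSL2 (Rp p)) : mat g 1 0 = 0 := g.property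

lemma diag_mul (g : upperTriangularSL2 (Rp p)) : mat g 0 0 * mat g 1 1 = 1 := by
  have hdet : (mat g).det = 1 := (g : Matrix.SpecialLinearGroup (Fin 2) (Rp p)).property
  rw [Matrix.det_fin_two, mat_10, mul_zero, sub_zero] at hdet
  exact hdet

lemma mat_mul_00 (g h : upperTriangularSL2 (Rp p)) :
    mat (g * h) 0 0 = mat g 0 0 * mat h 0 0 := by
  rw [mat_mul, Matrix.mul_apply, Fin.sum_univ_two, mat_10, mul_zero, add_zero]

include hp in
lemma toQ00_ne (g : upperTriangularSL2 (Rp p)) : toQ p hp (mat g 0 0) ≠ 0 := by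
  have : toQ p hp (mat g 0 0) * toQ p hp (mat g 1 1) = 1 := by
    rw [← map_mul, diag_mul, map_one]
  exact left_ne_zero_of_mul_eq_one this

noncomputable def sgn : upperTriangularSL2 (Rp p) →* ℤˣ where
  toFun g := if 0 < toQ p hp (mat g 0 0) then 1 else -1
  map_one' := by
    show (if 0 < toQ p hp (mat (1 : upperTriangularSL2 (Rp p)) 0 0) then (1 : ℤˣ) else -1) = 1
    rw [mat_one, Matrix.one_apply_eq, map_one, if_pos]
    norm_num
  map_mul' g h := by
    show (if 0 < toQ p hp (mat (g * h) 0 0) then (1 : ℤˣ) else -1)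
        = (if 0 < toQ p hp (mat g 0 0) then (1 : ℤˣ) else -1)
          * (if 0 < toQ p hp (mat h 0 0) then (1 : ℤˣ) else -1)
    have hx := toQ00_ne p hp g
    have hy := toQ00_ne p hp h
    rw [mat_mul_00, map_mul]
    rcases hx.lt_or_gt with hx1 | hx1 <;> rcases hy.lt_or_gt with hy1 | hy1
    · rw [if_pos (mul_pos_of_neg_of_neg hx1 hy1), if_neg (asymm hx1), if_neg (asymm hy1)]
      norm_num
    · rw [if_neg (asymm (mul_neg_of_neg_of_pos hx1 hy1)), if_neg (asymm hx1), if_pos hy1]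
      norm_num
    · rw [if_neg (asymm (mul_neg_of_pos_of_neg hx1 hy1)), if_pos hx1, if_neg (asymm hy1)]
      norm_num
    · rw [if_pos (mul_pos hx1 hy1), if_pos hx1, if_pos hy1]
      norm_num

lemma sgn_apply (g : upperTriangularSL2 (Rp p)) :
    sgn p hp g = if 0 < toQ p hp (mat g 0 0) then 1 else -1 := rfl

lemma sgn_A : sgn p hp (A p) = 1 := by
  rw [sgn_apply, if_pos]
  show (0 : ℚ) < toQ p hp (mat (dG (P p)) 0 0)
  have : mat (dG (P p)) 0 0 = ((P p : (Rp p)ˣ) : Rp p) := by simp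
  rw [this, toQ_P]
  exact_mod_cast hp.pos

lemma sgn_B : sgn p hp (Bm p) = 1 := by
  rw [sgn_apply, if_pos]
  show (0 : ℚ) < toQ p hp (mat (tG (1 : Rp p)) 0 0)
  have : mat (tG (1 : Rp p)) 0 0 = 1 := by simp
  rw [this, map_one]
  norm_num

include hp in
lemma range_le : (phi p).range ≤ (sgn p hp).ker := by
  rintro x ⟨g, rfl⟩
  have hmem : g ∈ ((sgn p hp).comp (phi p)).ker := by
    apply PresentedGroup.generated_by
    intro j
    cases j with
    | true =>
      show sgn p hp (phi p (a (p ^ 2))) = 1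
      rw [phi_a]; exact sgn_A p hp
    | false =>
      show sgn p hp (phi p (b (p ^ 2))) = 1
      rw [phi_b]; exact sgn_B p hp
  exact hmem

include hp in
lemma tG_mem_range (y : Rp p) : tG y ∈ (phi p).range := by
  obtain ⟨⟨mnum, s⟩, hs⟩ := IsLocalization.surj (Submonoid.powers ((p : ℤ))) y
  obtain ⟨e, he⟩ := s.2
  have he2 : ((p : ℤ)) ^ e = (s : ℤ) := he
  simp only at hs
  refine ⟨((a (p ^ 2))⁻¹) ^ e * (b (p ^ 2)) ^ ((p : ℤ) ^ e * mnum) * (a (p ^ 2)) ^ e, ?_⟩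
  rw [map_mul, map_mul, map_pow, map_inv, map_zpow, map_pow, phi_a, phi_b]
  rw [A, ← tG_intCast, dG_inv, dG_pow, dG_pow]
  have hval : (((P p) ^ e : (Rp p)ˣ) : Rp p) * (((P p) ^ e : (Rp p)ˣ) : Rp p) * y
      = algebraMap ℤ (Rp p) ((p : ℤ) ^ e * mnum) := by
    calc (((P p) ^ e : (Rp p)ˣ) : Rp p) * (((P p) ^ e : (Rp p)ˣ) : Rp p) * y
        = algebraMap ℤ (Rp p) ((p : ℤ) ^ e) * (y * algebraMap ℤ (Rp p) ((p : ℤ) ^ e)) := by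
          rw [Units.val_pow_eq_pow_val, P_coe, ← map_pow]; ring
      _ = algebraMap ℤ (Rp p) ((p : ℤ) ^ e) * algebraMap ℤ (Rp p) mnum := by
          rw [he2, hs]
      _ = algebraMap ℤ (Rp p) ((p : ℤ) ^ e * mnum) := (map_mul _ _ _).symm
  rw [← hval, ← dG_conj_tG ((P p) ^ e) y, inv_pow, ← dG_inv]
  group

include hp in
lemma ker_le_range : (sgn p hp).ker ≤ (phi p).range := by
  intro g hg
  have h1 : sgn p hp g = 1 := hg
  have hpos : 0 < toQ p hp (mat g 0 0) := by
    by_contra hneg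
    rw [sgn_apply, if_neg hneg] at h1
    exact absurd h1 (by decide)
  obtain ⟨u, hu⟩ := IsUnit.of_mul_eq_one _ (diag_mul p g)
  obtain ⟨k, hk⟩ := pos_unit_eq_P_zpow p hp u (by rw [hu]; exact hpos)
  have hdecomp : g = dG u * tG (((u⁻¹ : (Rp p)ˣ) : Rp p) * mat g 0 1) := by
    apply ext_mat
    rw [mat_dG_mul_tG]
    have h11 : mat g 1 1 = ((u⁻¹ : (Rp p)ˣ) : Rp p) := by
      have := diag_mul p g
      rw [← hu] at this
      exact (Units.inv_eq_of_mul_eq_one_right this).symm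
    ext i j
    fin_cases i <;> fin_cases j
    · simpa using hu.symm
    · show mat g 0 1 = (u : Rp p) * ((((u⁻¹ : (Rp p)ˣ)) : Rp p) * mat g 0 1)
      rw [← mul_assoc, Units.mul_inv, one_mul]
    · simpa using mat_10 p g
    · simpa using h11
  rw [hdecomp, hk, ← dG_zpow]
  apply Subgroup.mul_mem
  · exact ⟨(a (p ^ 2)) ^ k, by rw [map_zpow, phi_a, A]⟩
  · exact tG_mem_range p hp _

include hp in
lemma range_eq_ker : (phi p).range = (sgn p hp).ker :=
  le_antisymm (range_le p hp) (ker_le_range p hp)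

include hp in
lemma index_two : (phi p).range.index = 2 := by
  rw [range_eq_ker p hp, Subgroup.index_ker]
  have hsurj : Function.Surjective (sgn p hp) := by
    intro u
    rcases Int.units_eq_one_or u with rfl | rfl
    · exact ⟨1, map_one _⟩
    · refine ⟨dG (-1 : (Rp p)ˣ), ?_⟩
      rw [sgn_apply, if_neg]
      have : mat (dG (-1 : (Rp p)ˣ)) 0 0 = (-1 : Rp p) := by simp
      rw [this, map_neg, map_one]
      norm_num
  have htop : (sgn p hp).range = ⊤ := MonoidHom.range_eq_top.mpr hsurj
  rw [htop]
  rw [show Nat.card ↥(⊤ : Subgroup ℤˣ) = Nat.card ℤˣ from Nat.card_congr Subgroup.topEquiv.toEquiv]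
  simp

end Main

/-- for a prime `p`, the Baumslag–Solitar group `BS(1, p²)` embeds as an
index-2 subgroup of `B₂(ℤ[1/p])`, the upper triangular subgroup of `SL₂(ℤ[1/p])`. -/
theorem baumslagSolitar_index_two_in_B2
    (p : ℕ) (hp : p.Prime) :
    ∃ φ : BaumslagSolitar (p ^ 2) →* upperTriangularSL2 (Localization.Away (p : ℤ)),
      Function.Injective φ ∧ φ.range.index = 2 :=
  ⟨Main.phi p, Main.phi_inj p hp, Main.index_two p hp⟩
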